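/- Define P_cov^C(θ,λ,h) = (1/(ψ(θ)+1))·exp(-πλh²·ψ(θ)) with ψ(θ) > 0. The maximal ASE, max_λ λ·P_cov^C(θ,λ,h)·log₂(1+θ), equals (log₂(1+θ))/(e·πh²·ψ(θ)·(ψ(θ)+1)), and in particular is proportional to 1/h². -/

import Mathlib

open Real

lemma key_ineq (x : ℝ) : x * Real.exp (-x) ≤ Real.exp (-1) := by
  have h1 : x ≤ Real.exp (x - 1) := by
    have := Real.add_one_le_exp (x - 1)
    linarith
  calc x * Real.exp (-x) ≤ Real.exp (x - 1) * Real.exp (-x) := by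
        apply mul_le_mul_of_nonneg_right h1 (Real.exp_pos _).le
    _ = Real.exp (-1) := by rw [← Real.exp_add]; ring_nf

theorem max_ase_value (θ h ψθ : ℝ) (hθ : 0 < θ) (hh : 0 < h) (hψ : 0 < ψθ) :
    let Pcov : ℝ → ℝ := fun lam => (1 / (ψθ + 1)) * Real.exp (-(π * lam * h ^ 2 * ψθ))
    let ASE : ℝ → ℝ := fun lam => lam * Pcov lam * Real.logb 2 (1 + θ)
    let lamOpt : ℝ := 1 / (π * h ^ 2 * ψθ)
    ASE lamOpt = Real.logb 2 (1 + θ) / (Real.exp 1 * π * h ^ 2 * ψθ * (ψθ + 1)) ∧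
      ∀ lam : ℝ, 0 < lam → ASE lam ≤ Real.logb 2 (1 + θ) / (Real.exp 1 * π * h ^ 2 * ψθ * (ψθ + 1)) := by
  intro Pcov ASE lamOpt
  have hc : 0 < π * h ^ 2 * ψθ := by positivity
  have hψ1 : 0 < ψθ + 1 := by linarith
  have hlog : 0 < Real.logb 2 (1 + θ) := Real.logb_pos one_lt_two (by linarith)
  have he : Real.exp (-1) = 1 / Real.exp 1 := by
    rw [Real.exp_neg]; exact (one_div _).symm
  constructor
  · show lamOpt * Pcov lamOpt * Real.logb 2 (1 + θ) = _
    have h1 : π * lamOpt * h ^ 2 * ψθ = 1 := by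
      simp only [lamOpt]; field_simp
    simp only [Pcov, h1, he]
    field_simp [lamOpt]
    linear_combination h1
  · intro lam hlam
    show lam * Pcov lam * Real.logb 2 (1 + θ) ≤ _
    set c := π * h ^ 2 * ψθ with hcdef
    have hkey : (c * lam) * Real.exp (-(c * lam)) ≤ Real.exp (-1) := key_ineq _
    have harg : π * lam * h ^ 2 * ψθ = c * lam := by rw [hcdef]; ring
    have hE : Real.exp (-(π * lam * h ^ 2 * ψθ)) = Real.exp (-(c * lam)) := by rw [harg]
    simp only [Pcov, hE]
    rw [he] at hkey
    set L := Real.logb 2 (1 + θ)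
    have hL1 : lam * (1 / (ψθ + 1) * Real.exp (-(c * lam))) * L
        = (c * lam * Real.exp (-(c * lam))) * (L / (c * (ψθ + 1))) := by
      field_simp
    have hL2 : L / (Real.exp 1 * π * h ^ 2 * ψθ * (ψθ + 1))
        = (1 / Real.exp 1) * (L / (c * (ψθ + 1))) := by
      rw [hcdef]; field_simp [Real.exp_ne_zero]
    rw [hL1, hL2]
    exact mul_le_mul_of_nonneg_right hkey (by positivity)
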